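/- Every nonzero product of arrows in B(Z_2) is of the form ρ_i ρ_{i+1} ··· ρ_j with consecutive increasing indices: if (k_1, …, k_m) is a sequence of indices in {1,…,7} with m ≥ 2 such that the product ρ_{k_1} ρ_{k_2} ··· ρ_{k_m} is nonzero in B(Z_2), then k_{t+1} = k_t + 1 for all t. -/

import Mathlib

open FreeAlgebra

/-- Generators of the path algebra `B(Z_2)`: four vertex idempotents and seven arrows. -/
inductive Gen2 : Type
  | e : Fin 4 → Gen2
  | r : Fin 7 → Gen2

/-- Sources of the arrows ρ₁,…,ρ₇. -/
def src2 : Fin 7 → Fin 4 := ![0, 1, 0, 1, 2, 3, 2]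

/-- Targets of the arrows ρ₁,…,ρ₇. -/
def tgt2 : Fin 7 → Fin 4 := ![1, 0, 1, 2, 3, 2, 3]

/-- Relations presenting `B(Z_2)` as a quotient of the free algebra: the path-algebra
relations for the quiver together with ρ₁ρ₄ = ρ₄ρ₇ = ρ₂ρ₁ = ρ₃ρ₂ = ρ₆ρ₅ = ρ₇ρ₆ = 0. -/
inductive Rel2 : FreeAlgebra (ZMod 2) Gen2 → FreeAlgebra (ZMod 2) Gen2 → Prop
  | idem (k : Fin 4) :
      Rel2 (ι (ZMod 2) (Gen2.e k) * ι (ZMod 2) (Gen2.e k)) (ι (ZMod 2) (Gen2.e k))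
  | orth (k l : Fin 4) (h : k ≠ l) : Rel2 (ι (ZMod 2) (Gen2.e k) * ι (ZMod 2) (Gen2.e l)) 0
  | sum : Rel2 (∑ k : Fin 4, ι (ZMod 2) (Gen2.e k)) 1
  | source (m : Fin 7) :
      Rel2 (ι (ZMod 2) (Gen2.e (src2 m)) * ι (ZMod 2) (Gen2.r m)) (ι (ZMod 2) (Gen2.r m))
  | target (m : Fin 7) :
      Rel2 (ι (ZMod 2) (Gen2.r m) * ι (ZMod 2) (Gen2.e (tgt2 m))) (ι (ZMod 2) (Gen2.r m))
  | rel14 : Rel2 (ι (ZMod 2) (Gen2.r 0) * ι (ZMod 2) (Gen2.r 3)) 0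
  | rel47 : Rel2 (ι (ZMod 2) (Gen2.r 3) * ι (ZMod 2) (Gen2.r 6)) 0
  | rel21 : Rel2 (ι (ZMod 2) (Gen2.r 1) * ι (ZMod 2) (Gen2.r 0)) 0
  | rel32 : Rel2 (ι (ZMod 2) (Gen2.r 2) * ι (ZMod 2) (Gen2.r 1)) 0
  | rel65 : Rel2 (ι (ZMod 2) (Gen2.r 5) * ι (ZMod 2) (Gen2.r 4)) 0
  | rel76 : Rel2 (ι (ZMod 2) (Gen2.r 6) * ι (ZMod 2) (Gen2.r 5)) 0

/-- The genus-2 bordered algebra `B(Z_2)`. -/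
abbrev B2 : Type := RingQuot Rel2

/-- The idempotents i₀, i₁, i₂, i₃ in `B(Z_2)`. -/
noncomputable def idem2 (k : Fin 4) : B2 :=
  RingQuot.mkAlgHom (ZMod 2) Rel2 (ι (ZMod 2) (Gen2.e k))

/-- The arrows ρ₁,…,ρ₇ in `B(Z_2)` (indexed by `Fin 7`). -/
noncomputable def arr2 (m : Fin 7) : B2 :=
  RingQuot.mkAlgHom (ZMod 2) Rel2 (ι (ZMod 2) (Gen2.r m))

/-- The arrow ρ_k in `B(Z_2)`, using 1-based indexing; `0` for out-of-range indices. -/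
noncomputable def ρ2 (k : ℕ) : B2 :=
  if h : 1 ≤ k ∧ k ≤ 7 then arr2 ⟨k - 1, by omega⟩ else 0

/-- The chord ρ_{[i,j]} = ρ_i ρ_{i+1} ⋯ ρ_j in `B(Z_2)` (1-based indices). -/
noncomputable def chord2 (i j : ℕ) : B2 :=
  ((List.range' i (j + 1 - i)).map ρ2).prod



lemma mk2_rel {a b : FreeAlgebra (ZMod 2) Gen2} (h : Rel2 a b) :
    RingQuot.mkAlgHom (ZMod 2) Rel2 a = RingQuot.mkAlgHom (ZMod 2) Rel2 b :=
  RingQuot.mkAlgHom_rel _ h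

lemma arr_tgt2 (m : Fin 7) : arr2 m * idem2 (tgt2 m) = arr2 m := by
  have := mk2_rel (Rel2.target m)
  simpa [arr2, idem2, map_mul] using this

lemma src_arr2 (m : Fin 7) : idem2 (src2 m) * arr2 m = arr2 m := by
  have := mk2_rel (Rel2.source m)
  simpa [arr2, idem2, map_mul] using this

lemma orth2 (k l : Fin 4) (h : k ≠ l) : idem2 k * idem2 l = 0 := by
  have := mk2_rel (Rel2.orth k l h)
  simpa [idem2, map_mul] using this

lemma noncomp2 (a b : Fin 7) (h : tgt2 a ≠ src2 b) : arr2 a * arr2 b = 0 := by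
  conv_lhs => rw [← arr_tgt2 a, ← src_arr2 b]
  rw [mul_assoc, ← mul_assoc (idem2 (tgt2 a)), orth2 _ _ h, zero_mul, mul_zero]

lemma relzero2 {a b : Fin 7} (h : Rel2 (ι (ZMod 2) (Gen2.r a) * ι (ZMod 2) (Gen2.r b)) 0) :
    arr2 a * arr2 b = 0 := by
  have := mk2_rel h
  simpa [arr2, map_mul] using this

lemma key2 (a b : Fin 7) (h : (b : ℕ) ≠ (a : ℕ) + 1) : arr2 a * arr2 b = 0 := by
  fin_cases a <;> fin_cases b <;>
    first
      | exact absurd rfl h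
      | exact relzero2 Rel2.rel14
      | exact relzero2 Rel2.rel47
      | exact relzero2 Rel2.rel21
      | exact relzero2 Rel2.rel32
      | exact relzero2 Rel2.rel65
      | exact relzero2 Rel2.rel76
      | exact noncomp2 _ _ (by decide)

lemma rho_mul_zero {a b : ℕ} (ha : 1 ≤ a ∧ a ≤ 7) (hb : 1 ≤ b ∧ b ≤ 7)
    (h : b ≠ a + 1) : ρ2 a * ρ2 b = 0 := by
  rw [ρ2, dif_pos ha, ρ2, dif_pos hb]
  exact key2 _ _ (by show b - 1 ≠ a - 1 + 1; omega)

/-- every nonzero product of at least two arrows in B(Z_2) has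
consecutive increasing indices. -/
theorem stmt_15 (ks : List ℕ) (hlen : 2 ≤ ks.length)
    (hmem : ∀ k ∈ ks, 1 ≤ k ∧ k ≤ 7)
    (hne : (ks.map ρ2).prod ≠ 0) :
    ks.Chain' (fun a b => b = a + 1) := by
  induction ks with
  | nil => simp at hlen
  | cons a t ih =>
    match t with
    | [] => simp at hlen
    | b :: u =>
      show List.IsChain _ (a :: b :: u)
      rw [List.isChain_cons_cons]
      have hab : b = a + 1 := by
        by_contra h
        exact hne (by
          simp only [List.map_cons, List.prod_cons, ← mul_assoc,
            rho_mul_zero (hmem a (by simp)) (hmem b (by simp)) h, zero_mul])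
      refine ⟨hab, ?_⟩
      match u with
      | [] => exact List.isChain_singleton b
      | c :: v =>
        refine ih (by simp) (fun k hk => hmem k (List.mem_cons_of_mem a hk)) ?_
        intro h0
        exact hne (by simp only [List.map_cons, List.prod_cons] at *; rw [h0, mul_zero])
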